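/- The kernel of the homomorphism D_v : Sym(G,v) → GL(kGv) consists exactly of the permutations π of G that map every left coset of the stabilizer H = G_v onto itself; in particular this kernel is isomorphic to the direct product of |G:H| copies of the symmetric group on H. -/

import Mathlib

open Pointwise

namespace AuxKerDv

variable {G : Type*} [Group G] (H : Subgroup G)

/-- The subgroup of permutations of `G` preserving each left coset of `H`. -/
def cosetPerms : Subgroup (Equiv.Perm G) where
  carrier := {π : Equiv.Perm G | ∀ g : G, (QuotientGroup.mk (π g) : G ⧸ H) = QuotientGroup.mk g}
  one_mem' := fun _ => rfl
  mul_mem' := by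
    intro a b ha hb g
    have : (a * b) g = a (b g) := rfl
    rw [this, ha (b g), hb g]
  inv_mem' := by
    intro a ha g
    have h := ha (a⁻¹ g)
    rw [← Equiv.Perm.mul_apply, mul_inv_cancel, Equiv.Perm.one_apply] at h
    exact h.symm

/-- The left coset of `H` determined by `q : G ⧸ H`, as a subtype. -/
abbrev fiber (q : G ⧸ H) : Type _ := {g : G // (QuotientGroup.mk g : G ⧸ H) = q}

/-- The restriction of a coset-preserving permutation to each coset. -/
def toPerms : cosetPerms H →* ∀ q : G ⧸ H, Equiv.Perm (fiber H q) where
  toFun π := fun q =>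
    { toFun := fun x => ⟨π.1 x.1, by rw [π.2 x.1, x.2]⟩
      invFun := fun x => ⟨π.1⁻¹ x.1, by
        have h := π.2 (π.1⁻¹ x.1)
        rw [← Equiv.Perm.mul_apply, mul_inv_cancel, Equiv.Perm.one_apply] at h
        rw [← h, x.2]⟩
      left_inv := fun x => Subtype.ext (Equiv.symm_apply_apply _ _)
      right_inv := fun x => Subtype.ext (Equiv.apply_symm_apply _ _) }
  map_one' := by
    funext q; ext x; rfl
  map_mul' := by
    intro a b; funext q; ext x; rfl

theorem toPerms_bijective : Function.Bijective (toPerms H) := by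
  constructor
  · intro a b hab
    apply Subtype.ext
    apply Equiv.ext
    intro g
    have := congrFun hab (QuotientGroup.mk g)
    have h2 := congrArg (fun e : Equiv.Perm (fiber H (QuotientGroup.mk g)) =>
      (e ⟨g, rfl⟩ : fiber H (QuotientGroup.mk g)).1) this
    exact h2
  · intro σ
    set p : G → G ⧸ H := QuotientGroup.mk with hp
    set π : Equiv.Perm G :=
      ((Equiv.sigmaFiberEquiv p).symm.trans (Equiv.sigmaCongrRight σ)).trans
        (Equiv.sigmaFiberEquiv p) with hπ
    have hπapp : ∀ g : G, π g = (σ (p g) ⟨g, rfl⟩).1 := fun g => rfl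
    have hmem : π ∈ cosetPerms H := by
      intro g
      rw [hπapp g]
      exact (σ (p g) ⟨g, rfl⟩).2
    refine ⟨⟨π, hmem⟩, ?_⟩
    funext q
    ext x
    obtain ⟨g, hg⟩ := x
    subst hg
    rfl

/-- Each left coset of `H` is equivalent to `H`. -/
noncomputable def fiberEquiv (q : G ⧸ H) : fiber H q ≃ H where
  toFun x := ⟨(Quotient.out q)⁻¹ * x.1, by
    rw [← QuotientGroup.eq]
    show (QuotientGroup.mk (Quotient.out q) : G ⧸ H) = QuotientGroup.mk x.1
    rw [x.2]
    exact Quotient.out_eq q⟩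
  invFun h := ⟨Quotient.out q * h.1, by
    rw [QuotientGroup.mk_mul_of_mem _ h.2]
    exact Quotient.out_eq q⟩
  left_inv x := Subtype.ext (by group)
  right_inv h := Subtype.ext (by group)

/-- `Equiv.permCongr` as a `MulEquiv`. -/
def permCongrMul {α β : Type*} (e : α ≃ β) : Equiv.Perm α ≃* Equiv.Perm β :=
  { Equiv.permCongr e with
    map_mul' := fun a b => Equiv.ext fun x => by
      simp [Equiv.permCongr_apply, Equiv.Perm.mul_apply] }

/-- The coset-preserving permutations are a direct product of `|G : H|` copies of `Sym(H)`. -/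
noncomputable def cosetPermsMulEquiv : cosetPerms H ≃* ((G ⧸ H) → Equiv.Perm H) :=
  (MulEquiv.ofBijective (toPerms H) (toPerms_bijective H)).trans
    (MulEquiv.piCongrRight fun q => permCongrMul (fiberEquiv H q))

end AuxKerDv

/-- The kernel of `D_v : Sym(G,v) → GL(kGv)` consists exactly of the
permutations of `G` mapping every left coset of the stabilizer `H = G_v` onto itself,
and this kernel is isomorphic to a direct product of `|G:H|` copies of `Sym(H)`. -/
theorem ker_Dv_eq_coset_perms
    {k G V : Type*} [Field k] [Group G] [Finite G]
    [AddCommGroup V] [Module k V] [DistribMulAction G V] [SMulCommClass G k V]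
    (v : V) :
    (∀ π : Equiv.Perm G,
      (∀ g : G, π g • v = g • v) ↔
        (∀ g : G, ⇑π '' (g • (MulAction.stabilizer G v : Set G)) =
          g • (MulAction.stabilizer G v : Set G))) ∧
    ∃ K : Subgroup (Equiv.Perm G),
      ((K : Set (Equiv.Perm G)) = {π : Equiv.Perm G | ∀ g : G, π g • v = g • v}) ∧
      Nonempty (K ≃* ((G ⧸ MulAction.stabilizer G v) →
        Equiv.Perm (MulAction.stabilizer G v))) := by
  set H := MulAction.stabilizer G v with hH
  -- key characterization
  have key : ∀ (π : Equiv.Perm G) (g : G),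
      π g • v = g • v ↔ (QuotientGroup.mk (π g) : G ⧸ H) = QuotientGroup.mk g := by
    intro π g
    rw [QuotientGroup.eq]
    constructor
    · intro h
      show (π g)⁻¹ * g ∈ MulAction.stabilizer G v
      rw [MulAction.mem_stabilizer_iff, mul_smul, ← h, inv_smul_smul]
    · intro h
      have h' : ((π g)⁻¹ * g) • v = v := h
      rw [mul_smul] at h'
      calc π g • v = π g • ((π g)⁻¹ • (g • v)) := by rw [h']
        _ = g • v := smul_inv_smul _ _
  have memco : ∀ g x : G, x ∈ g • (H : Set G) ↔
      (QuotientGroup.mk g : G ⧸ H) = QuotientGroup.mk x := by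
    intro g x
    rw [QuotientGroup.eq]
    exact mem_leftCoset_iff g
  constructor
  · intro π
    constructor
    · intro h g
      ext x
      constructor
      · rintro ⟨y, hy, rfl⟩
        rw [memco] at hy ⊢
        rw [(key π y).mp (h y)]; exact hy
      · intro hx
        refine ⟨π⁻¹ x, ?_, Equiv.apply_symm_apply π x⟩
        rw [memco] at hx ⊢
        have h' := (key π (π⁻¹ x)).mp (h (π⁻¹ x))
        rw [← Equiv.Perm.mul_apply, mul_inv_cancel, Equiv.Perm.one_apply] at h'
        rw [hx, ← h']
    · intro h g
      rw [key]
      have hg : g ∈ g • (H : Set G) := (memco g g).mpr rfl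
      have : π g ∈ g • (H : Set G) := (h g) ▸ Set.mem_image_of_mem π hg
      exact ((memco g (π g)).mp this).symm
  · refine ⟨AuxKerDv.cosetPerms H, ?_, ⟨AuxKerDv.cosetPermsMulEquiv H⟩⟩
    ext π
    show (∀ g : G, (QuotientGroup.mk (π g) : G ⧸ H) = QuotientGroup.mk g) ↔ _
    simp only [Set.mem_setOf_eq, key]
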